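/- arXiv:2205.03151 — 13 statements merged into one kernel-verified Lean document; each statement's English description precedes it below -/
import Mathlib

section
/- Let SF = (A,R) be a SETAF, let E,E' ⊆ A be disjoint sets, and let SF^E = (A',R') be the E-reduct of SF. Assume E does not attack E' (i.e., not E ↦_R E') and E' ∈ cf(SF). Then E defends every element of E' in SF if and only if there is no S' ⊆ A' with S' ↦_{R'} E'. -/
/-- A SETAF: a finite set of arguments `A` together with an attack relation `R`
    whose elements are pairs `(T, h)` with nonempty tail `T ⊆ A` and head `h ∈ A`. -/
structure SETAF (α : Type*) where
  A : Set α
  R : Set (Set α × α)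
  finA : A.Finite
  tail_nonempty : ∀ r ∈ R, (r.1 : Set α).Nonempty
  tail_subset : ∀ r ∈ R, r.1 ⊆ A
  head_mem : ∀ r ∈ R, r.2 ∈ A

namespace SETAF

variable {α : Type*}

/-- `S ↦_R a` : the set `S` attacks the argument `a`. -/
def attacksArg (SF : SETAF α) (S : Set α) (a : α) : Prop :=
  ∃ T, T ⊆ S ∧ (T, a) ∈ SF.R

/-- `S ↦_R S'` : the set `S` attacks the set `S'`. -/
def attacksSet (SF : SETAF α) (S S' : Set α) : Prop :=
  ∃ a ∈ S', SF.attacksArg S a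

/-- `S⁺_R`. -/
def plus (SF : SETAF α) (S : Set α) : Set α := {a | SF.attacksArg S a}

/-- The range `S⊕_R = S ∪ S⁺_R`. -/
def range (SF : SETAF α) (S : Set α) : Set α := S ∪ SF.plus S

/-- Conflict-free sets. -/
def cf (SF : SETAF α) : Set (Set α) :=
  {S | S ⊆ SF.A ∧ ∀ r ∈ SF.R, ¬ (r.1 ∪ {r.2} ⊆ S)}

/-- `S` defends `a` : every attacker-set of `a` is counter-attacked by `S`. -/
def defends (SF : SETAF α) (S : Set α) (a : α) : Prop :=
  ∀ B ⊆ SF.A, SF.attacksArg B a → SF.attacksSet S B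

/-- Admissible sets. -/
def adm (SF : SETAF α) : Set (Set α) :=
  {S | S ∈ SF.cf ∧ ∀ a ∈ S, SF.defends S a}

/-- Complete extensions. -/
def com (SF : SETAF α) : Set (Set α) :=
  {S | S ∈ SF.adm ∧ ∀ a ∈ SF.A, SF.defends S a → a ∈ S}

/-- Stable extensions. -/
def stb (SF : SETAF α) : Set (Set α) :=
  {S | S ∈ SF.cf ∧ ∀ a ∈ SF.A \ S, SF.attacksArg S a}

/-- Preferred extensions. -/
def pref (SF : SETAF α) : Set (Set α) :=
  {S | S ∈ SF.adm ∧ ¬ ∃ T ∈ SF.adm, S ⊂ T}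

/-- Semi-stable extensions. -/
def sem (SF : SETAF α) : Set (Set α) :=
  {S | S ∈ SF.adm ∧ ¬ ∃ T ∈ SF.adm, SF.range S ⊂ SF.range T}

/-- The `E`-reduct `SF^E` of a SETAF. -/
def reduct (SF : SETAF α) (E : Set α) : SETAF α where
  A := SF.A \ SF.range E
  R := {r | ∃ T h, (T, h) ∈ SF.R ∧ T ∩ SF.plus E = ∅ ∧ ¬ T ⊆ E ∧
        h ∈ SF.A \ SF.range E ∧ r = (T \ E, h)}
  finA := SF.finA.subset Set.diff_subset
  tail_nonempty := by
    rintro r ⟨T, h, hR, hTE, hTsub, hh, rfl⟩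
    exact Set.diff_nonempty.mpr hTsub
  tail_subset := by
    rintro r ⟨T, h, hR, hTE, hTsub, hh, rfl⟩
    rintro t ⟨htT, htE⟩
    refine ⟨SF.tail_subset (T, h) hR htT, ?_⟩
    rintro (hE | hplus)
    · exact htE hE
    · exact Set.eq_empty_iff_forall_notMem.mp hTE t ⟨htT, hplus⟩
  head_mem := by
    rintro r ⟨T, h, hR, hTE, hTsub, hh, rfl⟩
    exact hh

/-- The restriction `SF↓_S^D` of a SETAF w.r.t. a set `S` and a set `D` of
    deleted (defeated) arguments. -/
def restrict (SF : SETAF α) (D S : Set α) : SETAF α where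
  A := (SF.A ∩ S) \ D
  R := {r | ∃ T h, (T, h) ∈ SF.R ∧ h ∈ (SF.A ∩ S) \ D ∧ T ∩ D = ∅ ∧
        (T ∩ ((SF.A ∩ S) \ D)).Nonempty ∧ r = (T ∩ ((SF.A ∩ S) \ D), h)}
  finA := SF.finA.subset (fun a ha => ha.1.1)
  tail_nonempty := by
    rintro r ⟨T, h, _, _, _, hne, rfl⟩
    exact hne
  tail_subset := by
    rintro r ⟨T, h, _, _, _, _, rfl⟩
    exact Set.inter_subset_right
  head_mem := by
    rintro r ⟨T, h, _, hh, _, _, rfl⟩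
    exact hh

/-- Edge of the primal graph of a SETAF. -/
def primalEdge (SF : SETAF α) (t h : α) : Prop := ∃ T, (T, h) ∈ SF.R ∧ t ∈ T

/-- `a` influences `b` : there is a directed path from `a` to `b` in the primal graph. -/
def influences (SF : SETAF α) : α → α → Prop := Relation.ReflTransGen SF.primalEdge

/-- The strongly connected component of an argument in the primal graph. -/
def scc (SF : SETAF α) (a : α) : Set α :=
  {b | SF.influences a b ∧ SF.influences b a}

/-- The strongly connected components of (the primal graph of) a SETAF. -/
def SCCs (SF : SETAF α) : Set (Set α) :=
  {S | ∃ a ∈ SF.A, S = SF.scc a}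

/-- Defeated arguments of an SCC `S` w.r.t. `E`. -/
def Dscc (SF : SETAF α) (S E : Set α) : Set α :=
  {a ∈ S | SF.attacksArg (E \ S) a}

/-- Provisionally defeated arguments of an SCC `S` w.r.t. `E`. -/
def Pscc (SF : SETAF α) (S E : Set α) : Set α :=
  {a ∈ S | SF.attacksArg (SF.A \ (S ∪ SF.plus E)) a} \ SF.Dscc S E

/-- Undefeated arguments of an SCC `S` w.r.t. `E`. -/
def Uscc (SF : SETAF α) (S E : Set α) : Set α :=
  S \ (SF.Dscc S E ∪ SF.Pscc S E)

/-- `UP_SF(S,E) = U_SF(S,E) ∪ P_SF(S,E)`. -/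
def UPscc (SF : SETAF α) (S E : Set α) : Set α :=
  SF.Uscc S E ∪ SF.Pscc S E

/-- The mitigated attacks `M_SF(S,E)`. -/
def Mscc (SF : SETAF α) (S E : Set α) : Set (Set α × α) :=
  {r ∈ (SF.restrict (SF.plus (E \ S)) (SF.UPscc S E)).R |
    ∀ T', (T', r.2) ∈ SF.R → r.1 ⊆ T' → ¬ T' \ r.1 ⊆ E}

/-- `a` is acceptable considering `M` w.r.t. `E` (in the given SETAF). -/
def acceptableM (SF : SETAF α) (M : Set (Set α × α)) (E : Set α) (a : α) : Prop :=
  ∀ T, (T, a) ∈ SF.R → ∃ X t, (X, t) ∈ SF.R ∧ (X, t) ∉ M ∧ X ⊆ E ∧ t ∈ T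

/-- `adm(SF, C, M)` : admissible in `C` considering `M`. -/
def admCM (SF : SETAF α) (C : Set α) (M : Set (Set α × α)) : Set (Set α) :=
  {E | E ⊆ C ∧ E ∈ SF.cf ∧ ∀ a ∈ E, SF.acceptableM M E a}

/-- `com(SF, C, M)` : complete in `C` considering `M`. -/
def comCM (SF : SETAF α) (C : Set α) (M : Set (Set α × α)) : Set (Set α) :=
  {E | E ∈ SF.admCM C M ∧ ∀ a ∈ C, SF.acceptableM M E a → a ∈ E}

/-- `pref(SF, C, M)` : preferred in `C` considering `M`. -/
def prefCM (SF : SETAF α) (C : Set α) (M : Set (Set α × α)) : Set (Set α) :=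
  {E | E ∈ SF.admCM C M ∧ ¬ ∃ E' ∈ SF.admCM C M, E ⊂ E'}

/-- The characteristic function `F^M_{SF,C}` of `SF` in `C` considering `M`. -/
def charF (SF : SETAF α) (C : Set α) (M : Set (Set α × α)) (E : Set α) : Set α :=
  {a ∈ C | SF.acceptableM M E a}

/-- The empty SETAF `(∅, ∅)`. -/
def emptySETAF (α : Type*) : SETAF α where
  A := ∅
  R := ∅
  finA := Set.finite_empty
  tail_nonempty := by simp
  tail_subset := by simp
  head_mem := by simp

end SETAF

/-- Lemma 1(2): assume `E` does not attack the conflict-free set `E'`.  Then `E`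
    defends every element of `E'` in `SF` iff no subset of the reduct's arguments
    attacks `E'` in `SF^E`. -/
theorem stmt1 {α : Type*} (SF : SETAF α) (E E' : Set α)
    (hE : E ⊆ SF.A) (hE' : E' ⊆ SF.A) (hdisj : Disjoint E E')
    (hnoatt : ¬ SF.attacksSet E E') (hcf : E' ∈ SF.cf) :
    (∀ a ∈ E', SF.defends E a) ↔
      ¬ ∃ S', S' ⊆ (SF.reduct E).A ∧ (SF.reduct E).attacksSet S' E' := by
  constructor
  · rintro hdef ⟨S', hS', a, haE', T', hT'S', hT'R⟩
    obtain ⟨T, h, hR, hTE, hTsub, hh, heq⟩ := hT'R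
    obtain ⟨rfl, rfl⟩ := Prod.mk.injEq _ _ _ _ ▸ heq
    -- T attacks a in SF, so E attacks T
    have hTA : T ⊆ SF.A := SF.tail_subset (T, a) hR
    obtain ⟨t, htT, X, hXE, hXR⟩ := hdef a haE' T hTA ⟨T, le_refl _, hR⟩
    exact Set.eq_empty_iff_forall_notMem.mp hTE t ⟨htT, X, hXE, hXR⟩
  · intro hno a haE' B hBA ⟨T, hTB, hTR⟩
    by_contra hnotatt
    -- T ∩ plus E = ∅
    have hTE : T ∩ SF.plus E = ∅ := by
      apply Set.eq_empty_iff_forall_notMem.mpr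
      rintro t ⟨htT, ht⟩
      exact hnotatt ⟨t, hTB htT, ht⟩
    have hTsub : ¬ T ⊆ E := by
      intro hTE'
      exact hnoatt ⟨a, haE', T, hTE', hTR⟩
    have hh : a ∈ SF.A \ SF.range E := by
      refine ⟨hE' haE', ?_⟩
      rintro (haE | haP)
      · exact hdisj.ne_of_mem haE haE' rfl
      · exact hnoatt ⟨a, haE', haP⟩
    have hmem : ((T \ E : Set α), a) ∈ (SF.reduct E).R :=
      ⟨T, a, hTR, hTE, hTsub, hh, rfl⟩
    exact hno ⟨T \ E, (SF.reduct E).tail_subset _ hmem,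
      a, haE', T \ E, le_refl _, hmem⟩
end

section
/- Let SF = (A,R) be a SETAF, let E,E' ⊆ A be disjoint sets, and let SF^E = (A',R') be the E-reduct of SF. If E ∈ cf(SF), E ∪ E' does not attack E in SF (i.e., not (E ∪ E') ↦_R E), E' ⊆ A', and E' ∈ cf(SF^E), then E ∪ E' ∈ cf(SF). -/
/-- Lemma 1(3): if `E` is conflict-free, `E ∪ E'` does not attack `E` in `SF`,
    `E' ⊆ A'` and `E'` is conflict-free in `SF^E`, then `E ∪ E'` is conflict-free
    in `SF`. -/
theorem stmt2 {α : Type*} (SF : SETAF α) (E E' : Set α)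
    (hE : E ⊆ SF.A) (hE' : E' ⊆ SF.A) (hdisj : Disjoint E E')
    (hEcf : E ∈ SF.cf) (hnoatt : ¬ SF.attacksSet (E ∪ E') E)
    (hsub : E' ⊆ (SF.reduct E).A) (hcf' : E' ∈ (SF.reduct E).cf) :
    E ∪ E' ∈ SF.cf := by
  refine ⟨Set.union_subset hE hE', ?_⟩
  rintro ⟨T, h⟩ hR hTh
  have hTsub : T ⊆ E ∪ E' := (Set.union_subset_iff.mp hTh).1
  have hh : h ∈ E ∪ E' := hTh (Set.mem_union_right _ rfl)
  -- E ∪ E' does not attack anything in E, hence plus E ∩ (E ∪ E') = ∅ relative pieces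
  have hEnoplus : ∀ a ∈ E, a ∉ SF.plus E := by
    intro a ha ⟨T', hT'sub, hT'R⟩
    exact hnoatt ⟨a, ha, T', hT'sub.trans Set.subset_union_left, hT'R⟩
  cases hh with
  | inl hhE => exact hnoatt ⟨h, hhE, T, hTsub, hR⟩
  | inr hhE' =>
    have hhA' := hsub hhE'
    -- T ∩ plus E = ∅
    have hTplus : T ∩ SF.plus E = ∅ := by
      ext t
      simp only [Set.mem_inter_iff, Set.mem_empty_iff_false, iff_false, not_and]
      intro htT htplus
      cases hTsub htT with
      | inl hE0 => exact hEnoplus t hE0 htplus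
      | inr hE'0 => exact (hsub hE'0).2 (Set.mem_union_right _ htplus)
    -- ¬ T ⊆ E
    have hTnE : ¬ T ⊆ E := by
      intro hTE
      exact hhA'.2 (Set.mem_union_right _ ⟨T, hTE, hR⟩)
    -- the reduced attack is inside E'
    have hmem : (T \ E, h) ∈ (SF.reduct E).R := ⟨T, h, hR, hTplus, hTnE, hhA', rfl⟩
    refine hcf'.2 _ hmem ?_
    rintro x hx
    rcases hx with ⟨htT, htE⟩ | hx
    · cases hTsub htT with
      | inl h0 => exact absurd h0 htE
      | inr h0 => exact h0
    · simpa using hx ▸ hhE'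
end

section
/- Let SF = (A,R) be a SETAF and let E,E' ⊆ A be disjoint sets. If E ∪ E' ∈ cf(SF), then the (E ∪ E')-reduct of SF equals the E'-reduct of the E-reduct of SF, i.e., SF^{E∪E'} = (SF^E)^{E'}. -/
lemma SETAF.ext_AR {α : Type*} {SF1 SF2 : SETAF α} (hA : SF1.A = SF2.A)
    (hR : SF1.R = SF2.R) : SF1 = SF2 := by
  cases SF1; cases SF2; cases hA; cases hR; rfl

/-- Lemma 1(5): if `E ∪ E'` is conflict-free, then `SF^{E ∪ E'} = (SF^E)^{E'}`. -/
theorem stmt4 {α : Type*} (SF : SETAF α) (E E' : Set α)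
    (hE : E ⊆ SF.A) (hE' : E' ⊆ SF.A) (hdisj : Disjoint E E')
    (hcf : E ∪ E' ∈ SF.cf) :
    SF.reduct (E ∪ E') = (SF.reduct E).reduct E' := by
  -- basic consequences of conflict-freeness
  have hcf' : ∀ T h, (T, h) ∈ SF.R → T ⊆ E ∪ E' → h ∉ E ∪ E' := by
    intro T h hR hT hh
    exact hcf.2 (T, h) hR (Set.union_subset hT (Set.singleton_subset_iff.mpr hh))
  have hnot_plus : ∀ a ∈ E ∪ E', a ∉ SF.plus (E ∪ E') := by
    rintro a ha ⟨T, hTsub, hTR⟩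
    exact hcf' T a hTR hTsub ha
  have hEsub : SF.plus E ⊆ SF.plus (E ∪ E') := by
    rintro a ⟨T, h1, h2⟩
    exact ⟨T, h1.trans Set.subset_union_left, h2⟩
  -- attacks in the reduct by E' come from attacks in SF by E ∪ E'
  have hred_plus : (SF.reduct E).plus E' ⊆ SF.plus (E ∪ E') := by
    rintro a ⟨T', hT'sub, hT'R⟩
    obtain ⟨T, h, hTR, hTplus, hTE, hh, heq⟩ := hT'R
    simp only [Prod.mk.injEq] at heq
    obtain ⟨rfl, rfl⟩ := heq
    refine ⟨T, ?_, hTR⟩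
    intro t ht
    by_cases htE : t ∈ E
    · exact Or.inl htE
    · exact Or.inr (hT'sub ⟨ht, htE⟩)
  -- equality of argument sets
  have hA : SF.A \ SF.range (E ∪ E') =
      (SF.A \ SF.range E) \ (SF.reduct E).range E' := by
    ext a
    simp only [Set.mem_diff, SETAF.range, Set.mem_union]
    constructor
    · rintro ⟨haA, hna⟩
      refine ⟨⟨haA, ?_⟩, ?_⟩
      · rintro (hE | hpE)
        · exact hna (Or.inl (Or.inl hE))
        · exact hna (Or.inr (hEsub hpE))
      · rintro (hE' | hp')
        · exact hna (Or.inl (Or.inr hE'))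
        · exact hna (Or.inr (hred_plus hp'))
    · rintro ⟨⟨haA, hnE⟩, hn'⟩
      refine ⟨haA, ?_⟩
      rintro ((hE | hE') | hp)
      · exact hnE (Or.inl hE)
      · exact hn' (Or.inl hE')
      · obtain ⟨T, hTsub, hTR⟩ := hp
        by_cases hTE : T ⊆ E
        · exact hnE (Or.inr ⟨T, hTE, hTR⟩)
        · apply hn'
          refine Or.inr ⟨T \ E, ?_, T, a, hTR, ?_, hTE, ⟨haA, hnE⟩, rfl⟩
          · rintro t ⟨htT, htE⟩
            exact (hTsub htT).resolve_left htE
          · apply Set.eq_empty_iff_forall_notMem.mpr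
            rintro t ⟨htT, htp⟩
            exact hnot_plus t (hTsub htT) (hEsub htp)
  -- equality of attack relations
  have hR : (SF.reduct (E ∪ E')).R = ((SF.reduct E).reduct E').R := by
    ext r
    constructor
    · rintro ⟨T, h, hTR, hTplus, hTsub, hh, rfl⟩
      refine ⟨T \ E, h, ⟨T, h, hTR, ?_, ?_, ?_, rfl⟩, ?_, ?_, ?_, ?_⟩
      · apply Set.eq_empty_iff_forall_notMem.mpr
        rintro t ⟨htT, htp⟩
        exact Set.eq_empty_iff_forall_notMem.mp hTplus t ⟨htT, hEsub htp⟩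
      · intro hTE; exact hTsub (hTE.trans Set.subset_union_left)
      · refine ⟨hh.1, fun hr => hh.2 ?_⟩
        rcases hr with hE | hp
        · exact Or.inl (Or.inl hE)
        · exact Or.inr (hEsub hp)
      · apply Set.eq_empty_iff_forall_notMem.mpr
        rintro t ⟨⟨htT, _⟩, htp⟩
        exact Set.eq_empty_iff_forall_notMem.mp hTplus t ⟨htT, hred_plus htp⟩
      · intro hsub
        apply hTsub
        intro t ht
        by_cases htE : t ∈ E
        · exact Or.inl htE
        · exact Or.inr (hsub ⟨ht, htE⟩)
      · exact hA ▸ hh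
      · rw [Set.diff_diff]
    · rintro ⟨T', h, hT'R, hT'plus, hT'sub, hh, rfl⟩
      obtain ⟨T, h2, hTR, hTplusE, hTE, hh2, heq⟩ := hT'R
      simp only [Prod.mk.injEq] at heq
      obtain ⟨rfl, rfl⟩ := heq
      refine ⟨T, h, hTR, ?_, ?_, ?_, ?_⟩
      · apply Set.eq_empty_iff_forall_notMem.mpr
        rintro t ⟨htT, S, hSsub, hSR⟩
        by_cases hSE : S ⊆ E
        · exact Set.eq_empty_iff_forall_notMem.mp hTplusE t ⟨htT, S, hSE, hSR⟩
        · have htE : t ∉ E := fun htE => hcf' S t hSR hSsub (Or.inl htE)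
          have htpE : t ∉ SF.plus E := fun hp =>
            Set.eq_empty_iff_forall_notMem.mp hTplusE t ⟨htT, hp⟩
          have htA : t ∈ SF.A := SF.tail_subset (T, h) hTR htT
          have hSpE : S ∩ SF.plus E = ∅ := by
            apply Set.eq_empty_iff_forall_notMem.mpr
            rintro s ⟨hsS, hsp⟩
            exact hnot_plus s (hSsub hsS) (hEsub hsp)
          have ht' : t ∈ (SF.reduct E).plus E' := by
            refine ⟨S \ E, ?_, S, t, hSR, hSpE, hSE, ⟨htA, fun hr => hr.elim htE htpE⟩, rfl⟩
            rintro s ⟨hsS, hsE⟩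
            exact (hSsub hsS).resolve_left hsE
          exact Set.eq_empty_iff_forall_notMem.mp hT'plus t ⟨⟨htT, htE⟩, ht'⟩
      · intro hsub
        apply hT'sub
        rintro t ⟨htT, htE⟩
        exact (hsub htT).resolve_left htE
      · exact hA.symm ▸ hh
      · rw [Set.diff_diff]
  exact SETAF.ext_AR hA hR
end

section
/- (Modularization.) Let SF = (A,R) be a SETAF, let σ ∈ {adm, com}, and let E ∈ σ(SF). Then: (1) if E' ∈ σ(SF^E), then E ∪ E' ∈ σ(SF); and (2) if E ∩ E' = ∅ and E ∪ E' ∈ σ(SF), then E' ∈ σ(SF^E). -/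
namespace SETAF

variable {α : Type*}

lemma not_plus_of_cf {SF : SETAF α} {S : Set α} (hS : S ∈ SF.cf) {a : α} (ha : a ∈ S) :
    a ∉ SF.plus S := by
  rintro ⟨T, hTS, hTR⟩
  exact hS.2 (T, a) hTR (Set.union_subset hTS (Set.singleton_subset_iff.mpr ha))

lemma reduct_attack_elim {SF : SETAF α} {E S : Set α} {a : α}
    (h : (S, a) ∈ (SF.reduct E).R) :
    ∃ T, (T, a) ∈ SF.R ∧ T ∩ SF.plus E = ∅ ∧ ¬ T ⊆ E ∧ a ∈ SF.A \ SF.range E ∧ S = T \ E := by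
  obtain ⟨T, h', hR, h1, h2, h3, heq⟩ := h
  rw [Prod.mk.injEq] at heq
  obtain ⟨hS, ha⟩ := heq
  subst ha
  exact ⟨T, hR, h1, h2, h3, hS⟩

lemma reduct_attack_intro {SF : SETAF α} {E T : Set α} {a : α}
    (hR : (T, a) ∈ SF.R) (h1 : T ∩ SF.plus E = ∅) (h2 : ¬ T ⊆ E)
    (h3 : a ∈ SF.A \ SF.range E) :
    (T \ E, a) ∈ (SF.reduct E).R :=
  ⟨T, a, hR, h1, h2, h3, rfl⟩

lemma counter {SF : SETAF α} {E E' T₀ : Set α} {t : α}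
    (hEcf : E ∈ SF.cf) (hE' : E' ⊆ SF.A \ SF.range E)
    (hT₀ : T₀ ⊆ E ∪ E') (ht : t ∈ SF.A \ SF.range E) (hR : (T₀, t) ∈ SF.R) :
    (T₀ \ E, t) ∈ (SF.reduct E).R ∧ T₀ \ E ⊆ E' := by
  have h1 : T₀ ∩ SF.plus E = ∅ := by
    ext u
    simp only [Set.mem_inter_iff, Set.mem_empty_iff_false, iff_false, not_and]
    intro huT hup
    rcases hT₀ huT with hu | hu
    · exact not_plus_of_cf hEcf hu hup
    · exact (hE' hu).2 (Or.inr hup)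
  have h2 : ¬ T₀ ⊆ E := fun hsub => ht.2 (Or.inr ⟨T₀, hsub, hR⟩)
  refine ⟨reduct_attack_intro hR h1 h2 ht, ?_⟩
  intro u hu
  rcases hT₀ hu.1 with h | h
  · exact absurd h hu.2
  · exact h

lemma union_cf {SF : SETAF α} {E E' : Set α}
    (hE : E ∈ SF.adm) (hE'cf : E' ∈ (SF.reduct E).cf) : E ∪ E' ∈ SF.cf := by
  have hE'A : E' ⊆ SF.A \ SF.range E := hE'cf.1
  constructor
  · exact Set.union_subset hE.1.1 (fun a ha => (hE'A ha).1)
  · rintro ⟨T, h⟩ hR hsub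
    simp only [Set.union_subset_iff, Set.singleton_subset_iff] at hsub
    obtain ⟨hT, hh⟩ := hsub
    rcases hh with hhE | hhE'
    · obtain ⟨t, htT, T₁, hT₁E, hT₁R⟩ :=
        hE.2 h hhE T (SF.tail_subset _ hR) ⟨T, subset_refl _, hR⟩
      rcases hT htT with ht | ht
      · exact not_plus_of_cf hE.1 ht ⟨T₁, hT₁E, hT₁R⟩
      · exact (hE'A ht).2 (Or.inr ⟨T₁, hT₁E, hT₁R⟩)
    · have hnsub : ¬ T ⊆ E := fun hs => (hE'A hhE').2 (Or.inr ⟨T, hs, hR⟩)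
      have h1 : T ∩ SF.plus E = ∅ := by
        ext u
        simp only [Set.mem_inter_iff, Set.mem_empty_iff_false, iff_false, not_and]
        intro huT hup
        rcases hT huT with hu | hu
        · exact not_plus_of_cf hE.1 hu hup
        · exact (hE'A hu).2 (Or.inr hup)
      have hR' := reduct_attack_intro hR h1 hnsub (hE'A hhE')
      apply hE'cf.2 (T \ E, h) hR'
      apply Set.union_subset _ (Set.singleton_subset_iff.mpr hhE')
      intro u hu
      rcases hT hu.1 with h' | h'
      · exact absurd h' hu.2
      · exact h'

lemma union_adm {SF : SETAF α} {E E' : Set α}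
    (hE : E ∈ SF.adm) (hE' : E' ∈ (SF.reduct E).adm) : E ∪ E' ∈ SF.adm := by
  have hE'A : E' ⊆ SF.A \ SF.range E := hE'.1.1
  refine ⟨union_cf hE hE'.1, ?_⟩
  rintro a ha B hBA ⟨T, hTB, hR⟩
  rcases ha with haE | haE'
  · obtain ⟨t, htB, T₁, hT₁, hT₁R⟩ := hE.2 a haE B hBA ⟨T, hTB, hR⟩
    exact ⟨t, htB, T₁, hT₁.trans Set.subset_union_left, hT₁R⟩
  · by_cases h2 : T ⊆ E
    · exact absurd (Or.inr ⟨T, h2, hR⟩) (hE'A haE').2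
    by_cases h1 : (T ∩ SF.plus E).Nonempty
    · obtain ⟨t, htT, T₁, hT₁, hT₁R⟩ := h1
      exact ⟨t, hTB htT, T₁, hT₁.trans Set.subset_union_left, hT₁R⟩
    · rw [Set.not_nonempty_iff_eq_empty] at h1
      have hR' := reduct_attack_intro hR h1 h2 (hE'A haE')
      obtain ⟨t, htTE, S, hSE', hSR'⟩ :=
        hE'.2 a haE' (T \ E) ((SF.reduct E).tail_subset _ hR') ⟨T \ E, subset_refl _, hR'⟩
      obtain ⟨T₀, hT₀R, _, _, _, rfl⟩ := reduct_attack_elim hSR'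
      refine ⟨t, hTB htTE.1, T₀, ?_, hT₀R⟩
      intro u hu
      by_cases huE : u ∈ E
      · exact Or.inl huE
      · exact Or.inr (hSE' ⟨hu, huE⟩)

lemma sub_reduct_A {SF : SETAF α} {E E' : Set α}
    (hdisj : E ∩ E' = ∅) (hU : E ∪ E' ∈ SF.cf) : E' ⊆ SF.A \ SF.range E := by
  intro a ha
  refine ⟨hU.1 (Or.inr ha), ?_⟩
  rintro (haE | ⟨T, hTE, hR⟩)
  · exact Set.eq_empty_iff_forall_notMem.mp hdisj a ⟨haE, ha⟩
  · exact hU.2 (T, a) hR (Set.union_subset (hTE.trans Set.subset_union_left)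
      (Set.singleton_subset_iff.mpr (Or.inr ha)))

lemma reduct_adm {SF : SETAF α} {E E' : Set α}
    (hE : E ∈ SF.adm) (hdisj : E ∩ E' = ∅) (hU : E ∪ E' ∈ SF.adm) :
    E' ∈ (SF.reduct E).adm := by
  have hE'A : E' ⊆ SF.A \ SF.range E := sub_reduct_A hdisj hU.1
  refine ⟨⟨hE'A, ?_⟩, ?_⟩
  · rintro ⟨S, h⟩ hR' hsub
    obtain ⟨T, hR, h1, h2, h3, rfl⟩ := reduct_attack_elim hR'
    simp only [Set.union_subset_iff, Set.singleton_subset_iff] at hsub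
    refine hU.1.2 (T, h) hR (Set.union_subset ?_ (Set.singleton_subset_iff.mpr (Or.inr hsub.2)))
    intro u hu
    by_cases huE : u ∈ E
    · exact Or.inl huE
    · exact Or.inr (hsub.1 ⟨hu, huE⟩)
  · rintro a haE' B hBA ⟨S, hSB, hSR'⟩
    obtain ⟨T, hR, h1, h2, h3, rfl⟩ := reduct_attack_elim hSR'
    obtain ⟨t, htT, T₀, hT₀U, hT₀R⟩ :=
      hU.2 a (Or.inr haE') T (SF.tail_subset _ hR) ⟨T, subset_refl _, hR⟩
    have htE : t ∉ E := fun htE =>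
      hU.1.2 (T₀, t) hT₀R
        (Set.union_subset hT₀U (Set.singleton_subset_iff.mpr (Or.inl htE)))
    have htA' : t ∈ SF.A \ SF.range E := hBA (hSB ⟨htT, htE⟩)
    obtain ⟨hmem, hsub⟩ := counter hE.1 hE'A hT₀U htA' hT₀R
    exact ⟨t, hSB ⟨htT, htE⟩, T₀ \ E, hsub, hmem⟩

lemma union_com {SF : SETAF α} {E E' : Set α}
    (hE : E ∈ SF.com) (hE' : E' ∈ (SF.reduct E).com) : E ∪ E' ∈ SF.com := by
  have hE'A : E' ⊆ SF.A \ SF.range E := hE'.1.1.1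
  have hUcf : E ∪ E' ∈ SF.cf := union_cf hE.1 hE'.1.1
  refine ⟨union_adm hE.1 hE'.1, ?_⟩
  intro a haA hdef
  by_cases haR : a ∈ SF.range E
  · rcases haR with haE | ⟨T, hTE, hR⟩
    · exact Or.inl haE
    · obtain ⟨t, htT, T₀, hT₀U, hT₀R⟩ := hdef T (SF.tail_subset _ hR) ⟨T, subset_refl _, hR⟩
      exact (hUcf.2 (T₀, t) hT₀R (Set.union_subset hT₀U
        (Set.singleton_subset_iff.mpr (Or.inl (hTE htT))))).elim
  · have haA' : a ∈ SF.A \ SF.range E := ⟨haA, haR⟩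
    right
    refine hE'.2 a haA' ?_
    rintro B' hB'A ⟨S, hSB', hSR'⟩
    obtain ⟨T, hR, h1, h2, h3, rfl⟩ := reduct_attack_elim hSR'
    obtain ⟨t, htT, T₀, hT₀U, hT₀R⟩ :=
      hdef T (SF.tail_subset _ hR) ⟨T, subset_refl _, hR⟩
    have htE : t ∉ E := fun htE =>
      hUcf.2 (T₀, t) hT₀R
        (Set.union_subset hT₀U (Set.singleton_subset_iff.mpr (Or.inl htE)))
    have htA' : t ∈ SF.A \ SF.range E := hB'A (hSB' ⟨htT, htE⟩)
    obtain ⟨hmem, hsub⟩ := counter hE.1.1 hE'A hT₀U htA' hT₀R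
    exact ⟨t, hSB' ⟨htT, htE⟩, T₀ \ E, hsub, hmem⟩

lemma reduct_com {SF : SETAF α} {E E' : Set α}
    (hE : E ∈ SF.com) (hdisj : E ∩ E' = ∅) (hU : E ∪ E' ∈ SF.com) :
    E' ∈ (SF.reduct E).com := by
  have hadm := reduct_adm hE.1 hdisj hU.1
  refine ⟨hadm, ?_⟩
  intro a haA' hdef'
  have hdef : SF.defends (E ∪ E') a := by
    rintro B hBA ⟨T, hTB, hR⟩
    by_cases h2 : T ⊆ E
    · exact absurd (Or.inr ⟨T, h2, hR⟩) haA'.2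
    by_cases h1 : (T ∩ SF.plus E).Nonempty
    · obtain ⟨t, htT, T₁, hT₁, hT₁R⟩ := h1
      exact ⟨t, hTB htT, T₁, hT₁.trans Set.subset_union_left, hT₁R⟩
    · rw [Set.not_nonempty_iff_eq_empty] at h1
      have hR' := reduct_attack_intro hR h1 h2 haA'
      obtain ⟨t, htTE, S, hSE', hSR'⟩ :=
        hdef' (T \ E) ((SF.reduct E).tail_subset _ hR') ⟨T \ E, subset_refl _, hR'⟩
      obtain ⟨T₀, hT₀R, _, _, _, rfl⟩ := reduct_attack_elim hSR'
      refine ⟨t, hTB htTE.1, T₀, ?_, hT₀R⟩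
      intro u hu
      by_cases huE : u ∈ E
      · exact Or.inl huE
      · exact Or.inr (hSE' ⟨hu, huE⟩)
  rcases hU.2 a haA'.1 hdef with h | h
  · exact absurd (Or.inl h) haA'.2
  · exact h

end SETAF

/-- Modularization: for `σ ∈ {adm, com}` and `E ∈ σ(SF)`:
    (1) `E' ∈ σ(SF^E)` implies `E ∪ E' ∈ σ(SF)`, and
    (2) if `E ∩ E' = ∅` and `E ∪ E' ∈ σ(SF)` then `E' ∈ σ(SF^E)`. -/
theorem stmt5 {α : Type*} (SF : SETAF α)
    (σ : SETAF α → Set (Set α))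
    (hσ : σ = SETAF.adm ∨ σ = SETAF.com)
    (E : Set α) (hE : E ∈ σ SF) :
    (∀ E', E' ∈ σ (SF.reduct E) → E ∪ E' ∈ σ SF) ∧
    (∀ E', E ∩ E' = ∅ → E ∪ E' ∈ σ SF → E' ∈ σ (SF.reduct E)) := by
  rcases hσ with rfl | rfl
  · exact ⟨fun E' h => SETAF.union_adm hE h, fun E' hd h => SETAF.reduct_adm hE hd h⟩
  · exact ⟨fun E' h => SETAF.union_com hE h, fun E' hd h => SETAF.reduct_com hE hd h⟩
end

section
/- Let SF = (A,R) be a SETAF, E ∈ cf(SF), and SF^E = (A',R') the E-reduct of SF. Then E ∈ adm(SF) if and only if for every S ⊆ A with S ↦_R E it holds that S ∖ E ⊈ A'. -/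
/-- Proposition 1(2): for conflict-free `E`, `E` is admissible iff every
    `S ⊆ A` attacking `E` satisfies `S ∖ E ⊈ A'`. -/
theorem stmt7 {α : Type*} (SF : SETAF α) (E : Set α) (hcf : E ∈ SF.cf) :
    E ∈ SF.adm ↔ ∀ S, S ⊆ SF.A → SF.attacksSet S E → ¬ (S \ E ⊆ (SF.reduct E).A) := by
  constructor
  · rintro ⟨_, hdef⟩ S hSA ⟨a, haE, hatk⟩ hsub
    obtain ⟨x, hxS, T, hTE, hTR⟩ := hdef a haE S hSA hatk
    have hxE : x ∉ E := fun hxE =>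
      hcf.2 (T, x) hTR (Set.union_subset hTE (by simpa using hxE))
    exact (hsub ⟨hxS, hxE⟩).2 (Or.inr ⟨T, hTE, hTR⟩)
  · intro h
    refine ⟨hcf, fun a haE B hBA hatk => ?_⟩
    have := h B hBA ⟨a, haE, hatk⟩
    rw [Set.not_subset] at this
    obtain ⟨b, ⟨hbB, hbE⟩, hnb⟩ := this
    have : b ∈ SF.range E := by
      by_contra hr
      exact hnb ⟨hBA hbB, hr⟩
    rcases this with hE | hplus
    · exact absurd hE hbE
    · exact ⟨b, hbB, hplus⟩
end

section
/- Let SF = (A,R) be a SETAF and E ∈ cf(SF). Then E ∈ pref(SF) if and only if E ∈ adm(SF) and the only admissible set of the E-reduct SF^E is the empty set (i.e., ⋃ adm(SF^E) = ∅). -/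

lemma cf_no_self_attack {α : Type*} (SF : SETAF α) {E : Set α} (hcf : E ∈ SF.cf)
    {a : α} (ha : a ∈ E) : ¬ SF.attacksArg E a := by
  rintro ⟨T, hTE, hR⟩
  refine hcf.2 (T, a) hR ?_
  rintro x (hx | hx)
  · exact hTE hx
  · simp only [Set.mem_singleton_iff] at hx; subst hx; exact ha

lemma attacksArg_mono {α : Type*} (SF : SETAF α) {S S' : Set α} (h : S ⊆ S') {a : α}
    (ha : SF.attacksArg S a) : SF.attacksArg S' a := by
  obtain ⟨T, h1, h2⟩ := ha
  exact ⟨T, h1.trans h, h2⟩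

/-- Proposition 1(3): for conflict-free `E`, `E` is preferred iff `E` is
    admissible and the union of all admissible sets of `SF^E` is empty. -/
theorem stmt8 {α : Type*} (SF : SETAF α) (E : Set α) (hcf : E ∈ SF.cf) :
    E ∈ SF.pref ↔ E ∈ SF.adm ∧ ⋃₀ ((SF.reduct E).adm) = ∅ := by
  constructor
  · rintro ⟨hadm, hmax⟩
    refine ⟨hadm, Set.eq_empty_iff_forall_notMem.mpr ?_⟩
    rintro x ⟨S, hS, hxS⟩
    have hSA' : S ⊆ SF.A \ SF.range E := hS.1.1
    have hxE : x ∉ E := fun h => (hSA' hxS).2 (Or.inl h)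
    apply hmax
    refine ⟨E ∪ S, ⟨⟨?_, ?_⟩, ?_⟩,
      (Set.ssubset_iff_of_subset Set.subset_union_left).mpr ⟨x, Or.inr hxS, hxE⟩⟩
    · rintro y (hy | hy)
      · exact hcf.1 hy
      · exact (hSA' hy).1
    · rintro ⟨T, h⟩ hR hsub
      have hT : T ⊆ E ∪ S := fun t ht => hsub (Or.inl ht)
      have hh : h ∈ E ∪ S := hsub (Or.inr rfl)
      have hTE' : T ∩ SF.plus E = ∅ := by
        apply Set.eq_empty_iff_forall_notMem.mpr
        rintro t ⟨htT, htE⟩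
        rcases hT htT with h1 | h1
        · exact cf_no_self_attack SF hcf h1 htE
        · exact (hSA' h1).2 (Or.inr htE)
      rcases hh with hh | hh
      · obtain ⟨t, htT, hatk⟩ := hadm.2 h hh T (SF.tail_subset _ hR) ⟨T, subset_rfl, hR⟩
        rcases hT htT with h1 | h1
        · exact cf_no_self_attack SF hcf h1 hatk
        · exact (hSA' h1).2 (Or.inr hatk)
      · by_cases hTEsub : T ⊆ E
        · exact (hSA' hh).2 (Or.inr ⟨T, hTEsub, hR⟩)
        · refine hS.1.2 (T \ E, h) ⟨T, h, hR, hTE', hTEsub, hSA' hh, rfl⟩ ?_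
          rintro y (⟨hyT, hyE⟩ | hy)
          · rcases hT hyT with h1 | h1
            · exact absurd h1 hyE
            · exact h1
          · simp only [Set.mem_singleton_iff] at hy; subst hy; exact hh
    · rintro a (ha | ha) B hBA ⟨T, hTB, hR⟩
      · obtain ⟨t, ht, hatk⟩ := hadm.2 a ha B hBA ⟨T, hTB, hR⟩
        exact ⟨t, ht, attacksArg_mono SF Set.subset_union_left hatk⟩
      · by_cases hTp : (T ∩ SF.plus E).Nonempty
        · obtain ⟨t, htT, htE⟩ := hTp
          exact ⟨t, hTB htT, attacksArg_mono SF Set.subset_union_left htE⟩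
        · have hTE' : T ∩ SF.plus E = ∅ := Set.not_nonempty_iff_eq_empty.mp hTp
          by_cases hTEsub : T ⊆ E
          · exact absurd ⟨T, hTEsub, hR⟩ (fun h => (hSA' ha).2 (Or.inr h))
          · have hrule : (T \ E, a) ∈ (SF.reduct E).R :=
              ⟨T, a, hR, hTE', hTEsub, hSA' ha, rfl⟩
            have hTsub' : T \ E ⊆ (SF.reduct E).A :=
              (SF.reduct E).tail_subset _ hrule
            obtain ⟨t, ht, T'', hT''S, hT''R⟩ :=
              hS.2 a ha (T \ E) hTsub' ⟨T \ E, subset_rfl, hrule⟩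
            obtain ⟨T₀, t', hT₀R, hT₀E, hT₀sub, hht, heq⟩ := hT''R
            injection heq with h1 h2
            subst h2
            refine ⟨t, hTB ht.1, T₀, ?_, hT₀R⟩
            intro y hy
            by_cases hyE : y ∈ E
            · exact Or.inl hyE
            · exact Or.inr (hT''S (h1.symm ▸ ⟨hy, hyE⟩))
  · rintro ⟨hadm, hun⟩
    refine ⟨hadm, ?_⟩
    rintro ⟨T, hTadm, hET⟩
    have hTplus : ∀ t ∈ T, t ∉ SF.plus E := fun t ht hatk =>
      cf_no_self_attack SF hTadm.1 ht (attacksArg_mono SF hET.1 hatk)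
    set S := T \ E with hSdef
    have hSA' : S ⊆ (SF.reduct E).A := by
      rintro t ⟨htT, htE⟩
      refine ⟨hTadm.1.1 htT, ?_⟩
      rintro (h | h)
      · exact htE h
      · exact hTplus t htT h
    have hT₀subT : ∀ T₀ : Set α, T₀ \ E ⊆ S → T₀ ⊆ T := by
      intro T₀ hsub y hy
      by_cases hyE : y ∈ E
      · exact hET.1 hyE
      · exact (hsub ⟨hy, hyE⟩).1
    have hSadm : S ∈ (SF.reduct E).adm := by
      refine ⟨⟨hSA', ?_⟩, ?_⟩
      · rintro ⟨T', h⟩ hR' hsub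
        obtain ⟨T₀, h', hT₀R, hT₀E, hT₀sub, hh, heq⟩ := hR'
        injection heq with h1 h2
        subst h2
        refine hTadm.1.2 (T₀, h) hT₀R ?_
        rintro y (hy | hy)
        · exact hT₀subT T₀ (h1.symm ▸ fun z hz => hsub (Or.inl hz)) hy
        · simp only [Set.mem_singleton_iff] at hy; subst hy
          exact (hsub (Or.inr rfl)).1
      · rintro a ha B' hB'A ⟨T'', hT''B, hT''R⟩
        obtain ⟨T₀, a', hT₀R, hT₀E, hT₀sub, hha, heq⟩ := hT''R
        injection heq with h1 h2
        subst h2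
        obtain ⟨t, htT₀, C, hCT, hCR⟩ :=
          hTadm.2 a ha.1 T₀ (SF.tail_subset _ hT₀R) ⟨T₀, subset_rfl, hT₀R⟩
        have htE : t ∉ E := by
          intro htE
          obtain ⟨c, hcC, hcatk⟩ :=
            hadm.2 t htE C (hCT.trans hTadm.1.1) ⟨C, subset_rfl, hCR⟩
          exact hTplus c (hCT hcC) hcatk
        have htT'' : t ∈ T'' := h1.symm ▸ ⟨htT₀, htE⟩
        have hCE : ¬ C ⊆ E := by
          intro hsub
          exact absurd ⟨C, hsub, hCR⟩
            (fun h => Set.eq_empty_iff_forall_notMem.mp hT₀E t ⟨htT₀, h⟩)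
        have hCp : C ∩ SF.plus E = ∅ := by
          apply Set.eq_empty_iff_forall_notMem.mpr
          rintro c ⟨hcC, hcp⟩
          exact hTplus c (hCT hcC) hcp
        have htA' : t ∈ (SF.reduct E).A := by
          have := (SF.reduct E).tail_subset (T'', a) ⟨T₀, a, hT₀R, hT₀E, hT₀sub, hha, by rw [h1]⟩
          exact this htT''
        refine ⟨t, hT''B htT'', C \ E, ?_, ⟨C, t, hCR, hCp, hCE, htA', rfl⟩⟩
        rintro y ⟨hyC, hyE⟩
        exact ⟨hCT hyC, hyE⟩
    obtain ⟨s, hs⟩ := Set.exists_of_ssubset hET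
    have : s ∈ (∅ : Set α) := hun ▸ Set.mem_sUnion.mpr ⟨S, hSadm, hs.1, hs.2⟩
    exact this
end

section
/- Let SF = (A,R) be a SETAF and E ∈ cf(SF). Then E ∈ com(SF) if and only if E ∈ adm(SF) and no argument of the E-reduct SF^E = (A',R') is unattacked in SF^E (an argument a ∈ A' is unattacked in SF^E if there is no (T,a) ∈ R'). -/
/-- Proposition 1(4): for conflict-free `E`, `E` is complete iff `E` is
    admissible and no argument of `SF^E` is unattacked in `SF^E`. -/
theorem stmt9 {α : Type*} (SF : SETAF α) (E : Set α) (hcf : E ∈ SF.cf) :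
    E ∈ SF.com ↔ E ∈ SF.adm ∧
      ¬ ∃ a ∈ (SF.reduct E).A, ¬ ∃ T, (T, a) ∈ (SF.reduct E).R := by
  constructor
  · rintro ⟨hadm, hcomp⟩
    refine ⟨hadm, ?_⟩
    rintro ⟨a, ⟨haA, haR⟩, hno⟩
    have hdef : SF.defends E a := by
      rintro B hB ⟨T, hTB, hTR⟩
      by_cases hTE : T ⊆ E
      · exact absurd (Or.inr ⟨T, hTE, hTR⟩) haR
      · by_contra hnot
        apply hno
        refine ⟨T \ E, T, a, hTR, ?_, hTE, ⟨haA, haR⟩, rfl⟩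
        ext t
        simp only [Set.mem_inter_iff, Set.mem_empty_iff_false, iff_false, not_and]
        intro htT htP
        exact hnot ⟨t, hTB htT, htP⟩
    exact haR (Or.inl (hcomp a haA hdef))
  · rintro ⟨hadm, hno⟩
    refine ⟨hadm, ?_⟩
    intro a haA hdef
    by_contra haE
    have haP : a ∉ SF.plus E := by
      rintro ⟨T, hTE, hTR⟩
      obtain ⟨t, htT, T', hT'E, hT'R⟩ :=
        hdef T (fun x hx => SF.tail_subset _ hTR hx) ⟨T, subset_rfl, hTR⟩
      refine hcf.2 (T', t) hT'R ?_
      intro x hx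
      rcases hx with hx | hx
      · exact hT'E hx
      · simp only [Set.mem_singleton_iff] at hx
        subst hx
        exact hTE htT
    apply hno
    refine ⟨a, ⟨haA, fun h => ?_⟩, ?_⟩
    · rcases h with h | h
      · exact haE h
      · exact haP h
    · rintro ⟨T', T, h, hTR, hTint, hTE, hh, heq⟩
      have hT' : T' = T \ E := congrArg Prod.fst heq
      have ha : a = h := congrArg Prod.snd heq
      subst ha
      obtain ⟨t, htT, hatt⟩ :=
        hdef T (fun x hx => SF.tail_subset _ hTR hx) ⟨T, subset_rfl, hTR⟩
      exact Set.eq_empty_iff_forall_notMem.mp hTint t ⟨htT, hatt⟩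
end

section
/- Let SF = (A,R) be a SETAF and E ∈ cf(SF). Then E ∈ sem(SF) if and only if E ∈ pref(SF) and there is no E' ∈ pref(SF) such that the argument set of the E'-reduct is a proper subset of the argument set of the E-reduct, i.e., A(SF^{E'}) ⊊ A(SF^E). -/
namespace SETAF

variable {α : Type*}

lemma plus_mono' (SF : SETAF α) {S T : Set α} (h : S ⊆ T) : SF.plus S ⊆ SF.plus T := by
  rintro a ⟨B, hB, hR⟩
  exact ⟨B, hB.trans h, hR⟩

lemma plus_subset_A (SF : SETAF α) (S : Set α) : SF.plus S ⊆ SF.A := by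
  rintro a ⟨B, hB, hR⟩
  exact SF.head_mem _ hR

lemma range_subset_A (SF : SETAF α) {S : Set α} (h : S ⊆ SF.A) :
    SF.range S ⊆ SF.A :=
  Set.union_subset h (SF.plus_subset_A S)

lemma range_ssubset_of_adm_ssubset (SF : SETAF α) {S T : Set α}
    (hT : T ∈ SF.cf) (hST : S ⊂ T) : SF.range S ⊂ SF.range T := by
  obtain ⟨a, haT, haS⟩ := Set.exists_of_ssubset hST
  constructor
  · exact Set.union_subset_union hST.1 (SF.plus_mono' hST.1)
  · intro hsub
    have ha : a ∈ SF.range S := hsub (Or.inl haT)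
    rcases ha with h | ⟨B, hB, hR⟩
    · exact haS h
    · exact hT.2 (B, a) hR (Set.union_subset (hB.trans hST.1) (by simpa using haT))

lemma exists_pref_superset (SF : SETAF α) {T : Set α} (hT : T ∈ SF.adm) :
    ∃ P ∈ SF.pref, T ⊆ P := by
  have hfin : {S : Set α | S ∈ SF.adm ∧ T ⊆ S}.Finite := by
    apply SF.finA.finite_subsets.subset
    rintro S ⟨hS, _⟩
    exact hS.1.1
  have hne : ({S : Set α | S ∈ SF.adm ∧ T ⊆ S}).Nonempty := ⟨T, hT, subset_rfl⟩
  obtain ⟨P, ⟨hPadm, hTP⟩, hmax⟩ := hfin.exists_maximalFor id _ hne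
  refine ⟨P, ⟨hPadm, ?_⟩, hTP⟩
  rintro ⟨U, hU, hPU⟩
  exact hPU.2 (hmax ⟨hU, hTP.trans hPU.1⟩ hPU.1)

end SETAF

/-- Proposition 1(5): for conflict-free `E`, `E` is semi-stable iff `E` is
    preferred and no preferred `E'` has `A(SF^{E'}) ⊊ A(SF^E)`. -/
theorem stmt10 {α : Type*} (SF : SETAF α) (E : Set α) (hcf : E ∈ SF.cf) :
    E ∈ SF.sem ↔ E ∈ SF.pref ∧
      ¬ ∃ E' ∈ SF.pref, (SF.reduct E').A ⊂ (SF.reduct E).A := by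
  have reductA : ∀ S : Set α, (SF.reduct S).A = SF.A \ SF.range S := fun _ => rfl
  -- translating reduct-argument comparison into range comparison
  have key : ∀ {S : Set α}, S ⊆ SF.A → SF.range E ⊂ SF.range S →
      (SF.reduct S).A ⊂ (SF.reduct E).A := by
    intro S hSA hss
    rw [reductA, reductA]
    constructor
    · exact Set.diff_subset_diff_right hss.1
    · intro hsub
      obtain ⟨a, haS, haE⟩ := Set.exists_of_ssubset hss
      have haA : a ∈ SF.A := SF.range_subset_A hSA haS
      exact (hsub ⟨haA, haE⟩).2 haS
  constructor
  · rintro ⟨hadm, hmax⟩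
    have hpref : E ∈ SF.pref := by
      refine ⟨hadm, ?_⟩
      rintro ⟨U, hU, hsub⟩
      exact hmax ⟨U, hU, SF.range_ssubset_of_adm_ssubset hU.1 hsub⟩
    refine ⟨hpref, ?_⟩
    rintro ⟨E', hE', hss⟩
    -- derive range E ⊂ range E'
    apply hmax
    refine ⟨E', hE'.1, ?_⟩
    rw [reductA, reductA] at hss
    constructor
    · intro a ha
      by_contra haE'
      have haA : a ∈ SF.A := SF.range_subset_A hcf.1 ha
      exact (hss.1 ⟨haA, haE'⟩).2 ha
    · intro hsub
      exact hss.2 (Set.diff_subset_diff_right hsub)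
  · rintro ⟨hpref, hnone⟩
    refine ⟨hpref.1, ?_⟩
    rintro ⟨T, hT, hrange⟩
    obtain ⟨P, hP, hTP⟩ := SF.exists_pref_superset hT
    apply hnone
    refine ⟨P, hP, key hP.1.1.1 ?_⟩
    exact hrange.trans_subset
      (Set.union_subset_union hTP (SF.plus_mono' hTP))
end

section
/- Let SF = (A,R) be a SETAF and let E,S ⊆ A. Then the restriction of SF with respect to S and (E ∖ S)⁺_R equals the restriction of the (E ∖ S)-reduct of SF with respect to S and ∅, i.e., SF↓_S^{(E∖S)⁺_R} = (SF^{E∖S})↓_S^∅. -/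
theorem SETAF.ext' {α : Type*} {X Y : SETAF α} (hA : X.A = Y.A) (hR : X.R = Y.R) :
    X = Y := by
  cases X; cases Y; simp_all

/-- Lemma 2: `SF↓_S^{(E∖S)⁺} = (SF^{E∖S})↓_S^∅`. -/
theorem stmt11 {α : Type*} (SF : SETAF α) (E S : Set α)
    (hE : E ⊆ SF.A) (hS : S ⊆ SF.A) :
    SF.restrict (SF.plus (E \ S)) S = (SF.reduct (E \ S)).restrict ∅ S := by
  set D := SF.plus (E \ S) with hD
  have hA1 : (SF.restrict D S).A = (SF.A ∩ S) \ D := rfl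
  have hA2 : ((SF.reduct (E \ S)).restrict ∅ S).A = (SF.A ∩ S) \ D := by
    show ((SF.A \ SF.range (E \ S)) ∩ S) \ ∅ = (SF.A ∩ S) \ D
    ext a
    simp only [SETAF.range, Set.mem_diff, Set.mem_inter_iff, Set.mem_union,
      Set.mem_empty_iff_false, not_false_iff, and_true]
    constructor
    · rintro ⟨⟨hA, hn⟩, hS⟩
      exact ⟨⟨hA, hS⟩, fun h => hn (Or.inr h)⟩
    · rintro ⟨⟨hA, hS⟩, hn⟩
      exact ⟨⟨hA, fun h => h.elim (fun h => h.2 hS) hn⟩, hS⟩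
  apply SETAF.ext'
  · rw [hA1, hA2]
  · have hkey : ∀ T : Set α, (T \ (E \ S)) ∩ ((SF.A ∩ S) \ D) = T ∩ ((SF.A ∩ S) \ D) := by
      intro T
      ext t
      simp only [Set.mem_inter_iff, Set.mem_diff, Set.mem_inter_iff]
      constructor
      · rintro ⟨⟨h1, _⟩, h2⟩; exact ⟨h1, h2⟩
      · rintro ⟨h1, h2⟩; exact ⟨⟨h1, fun h => h.2 h2.1.2⟩, h2⟩
    ext r
    constructor
    · rintro ⟨T, h, hR, hh, hTD, hne, rfl⟩
      have hhA2 : h ∈ ((SF.reduct (E \ S)).restrict ∅ S).A := by rw [hA2]; exact hh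
      have hhA2' : h ∈ ((SF.reduct (E \ S)).A ∩ S) \ (∅ : Set α) := hhA2
      have hhred : h ∈ SF.A \ SF.range (E \ S) := hhA2'.1.1
      have hnsub : ¬ T ⊆ E \ S := by
        obtain ⟨t, htT, htA⟩ := hne
        intro hsub
        exact (hsub htT).2 htA.1.2
      refine ⟨T \ (E \ S), h, ⟨T, h, hR, hTD, hnsub, hhred, rfl⟩, hhA2', by simp, ?_, ?_⟩
      · rw [show ((SF.reduct (E \ S)).A ∩ S) \ (∅ : Set α) = (SF.A ∩ S) \ D from hA2,
          hkey]
        exact hne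
      · rw [show ((SF.reduct (E \ S)).A ∩ S) \ (∅ : Set α) = (SF.A ∩ S) \ D from hA2,
          hkey]
    · rintro ⟨T', h, ⟨T, h', hR, hTD, hnsub, hhred, heq⟩, hh, -, hne, rfl⟩
      obtain ⟨rfl, rfl⟩ : T' = T \ (E \ S) ∧ h = h' :=
        ⟨congrArg Prod.fst heq, congrArg Prod.snd heq⟩
      have hA2' : ((SF.reduct (E \ S)).A ∩ S) \ (∅ : Set α) = (SF.A ∩ S) \ D := hA2
      rw [hA2'] at hh
      rw [hA2', hkey] at hne ⊢
      exact ⟨T, h, hR, hh, hTD, hne, rfl⟩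
end

section
/- Let SF = (A,R) be a SETAF and E ⊆ A. Then E ∈ stb(SF) if and only if for every S ∈ SCCs(SF) it holds that (E ∩ S) ∈ stb(SF↓_{UP_SF(S,E)}^{(E∖S)⁺_R}). -/
namespace SETAF

variable {α : Type*}

lemma mem_scc_self (SF : SETAF α) (a : α) : a ∈ SF.scc a :=
  ⟨Relation.ReflTransGen.refl, Relation.ReflTransGen.refl⟩

lemma influences_of_edge {SF : SETAF α} {T : Set α} {t h : α}
    (hR : (T, h) ∈ SF.R) (ht : t ∈ T) : SF.influences t h :=
  Relation.ReflTransGen.single ⟨T, hR, ht⟩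

lemma UP_subset (SF : SETAF α) (S E : Set α) : SF.UPscc S E ⊆ S := by
  rintro a (⟨haS, _⟩ | ⟨⟨haS, _⟩, _⟩) <;> exact haS

lemma mem_UP (SF : SETAF α) {S E : Set α} {a : α} (haS : a ∈ S)
    (h : ¬ SF.attacksArg (E \ S) a) : a ∈ SF.UPscc S E := by
  by_cases hp : a ∈ SF.Pscc S E
  · exact Or.inr hp
  · exact Or.inl ⟨haS, fun hc => hc.elim (fun hd => h hd.2) hp⟩

lemma mem_restrictA_iff (SF : SETAF α) (S E : Set α) (a : α) :
    a ∈ (SF.restrict (SF.plus (E \ S)) (SF.UPscc S E)).A ↔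
      a ∈ SF.A ∧ a ∈ S ∧ ¬ SF.attacksArg (E \ S) a := by
  constructor
  · rintro ⟨⟨haA, haUP⟩, hap⟩
    exact ⟨haA, SF.UP_subset S E haUP, hap⟩
  · rintro ⟨haA, haS, h⟩
    exact ⟨⟨haA, SF.mem_UP haS h⟩, h⟩

lemma mem_scc_capture {SF : SETAF α} {x s t h : α} (hs : s ∈ SF.scc x)
    (hst : SF.influences s t) (hth : SF.influences t h) (hh : h ∈ SF.scc x) :
    t ∈ SF.scc x :=
  ⟨hs.1.trans hst, hth.trans hh.2⟩

/-- `t` strictly precedes `a` in the SCC order. -/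
def prec (SF : SETAF α) (t a : α) : Prop :=
  SF.influences t a ∧ ¬ SF.influences a t

/-- rank of an argument: number of strict predecessors inside `A`. -/
noncomputable def rk (SF : SETAF α) (a : α) : ℕ :=
  {b ∈ SF.A | SF.prec b a}.ncard

lemma rk_lt {SF : SETAF α} {t a : α} (ht : t ∈ SF.A) (h : SF.prec t a) :
    SF.rk t < SF.rk a := by
  apply Set.ncard_lt_ncard
  · rw [Set.ssubset_iff_of_subset]
    · refine ⟨t, ⟨ht, h⟩, ?_⟩
      rintro ⟨-, h1, h2⟩
      exact h2 h1
    · rintro b ⟨hbA, hb⟩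
      exact ⟨hbA, hb.1.trans h.1, fun hab => h.2 (hab.trans hb.1)⟩
  · exact SF.finA.subset fun b hb => hb.1

/-- Forward direction: stability localizes to every SCC. -/
lemma forward_scc {SF : SETAF α} {E : Set α} (hE : E ⊆ SF.A) (hstb : E ∈ SF.stb)
    (x : α) :
    E ∩ SF.scc x ∈ (SF.restrict (SF.plus (E \ SF.scc x)) (SF.UPscc (SF.scc x) E)).stb := by
  set S := SF.scc x with hSdef
  have hcfE := hstb.1
  have hsub : E ∩ S ⊆ (SF.restrict (SF.plus (E \ S)) (SF.UPscc S E)).A := by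
    rintro a ⟨haE, haS⟩
    refine (SF.mem_restrictA_iff S E a).mpr ⟨hE haE, haS, ?_⟩
    rintro ⟨T, hTsub, hTR⟩
    refine hcfE.2 (T, a) hTR ?_
    rintro y (hy | hy)
    · exact (hTsub hy).1
    · exact hy ▸ haE
  refine ⟨⟨hsub, ?_⟩, ?_⟩
  · -- conflict-freeness in the restriction
    rintro r ⟨T, h, hR, hhA', hTplus, hne, rfl⟩ hrsub
    have hhES : h ∈ E ∩ S := hrsub (Or.inr rfl)
    have hTE : T ⊆ E := by
      intro t htT
      by_cases htS : t ∈ S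
      · have htA' : t ∈ (SF.restrict (SF.plus (E \ S)) (SF.UPscc S E)).A :=
          (SF.mem_restrictA_iff S E t).mpr
            ⟨SF.tail_subset _ hR htT, htS,
             fun hc => Set.eq_empty_iff_forall_notMem.mp hTplus t ⟨htT, hc⟩⟩
        exact (hrsub (Or.inl ⟨htT, htA'⟩)).1
      · by_contra htE
        obtain ⟨T', hT'E, hT'R⟩ := hstb.2 t ⟨SF.tail_subset _ hR htT, htE⟩
        by_cases hT'S : ∃ s ∈ T', s ∈ S
        · obtain ⟨s, hsT', hsS⟩ := hT'S
          have hhS : h ∈ S := ((SF.mem_restrictA_iff S E h).mp hhA').2.1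
          exact htS (SF.mem_scc_capture hsS (SF.influences_of_edge hT'R hsT')
            (SF.influences_of_edge hR htT) hhS)
        · push_neg at hT'S
          exact Set.eq_empty_iff_forall_notMem.mp hTplus t
            ⟨htT, T', fun s hs => ⟨hT'E hs, hT'S s hs⟩, hT'R⟩
    refine hcfE.2 (T, h) hR ?_
    rintro y (hy | hy)
    · exact hTE hy
    · exact hy ▸ hhES.1
  · -- stability in the restriction
    rintro a ⟨haA', haES⟩
    have haiff := (SF.mem_restrictA_iff S E a).mp haA'
    have haE : a ∉ E := fun h => haES ⟨h, haiff.2.1⟩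
    obtain ⟨T, hTE, hTR⟩ := hstb.2 a ⟨haiff.1, haE⟩
    have hTplus : T ∩ SF.plus (E \ S) = ∅ := by
      ext t
      simp only [Set.mem_inter_iff, Set.mem_empty_iff_false, iff_false, not_and]
      rintro htT ⟨T'', hT''sub, hT''R⟩
      refine hcfE.2 (T'', t) hT''R ?_
      rintro y (hy | hy)
      · exact (hT''sub hy).1
      · exact hy ▸ hTE htT
    have hTS : ∃ t ∈ T, t ∈ S := by
      by_contra hc; push_neg at hc
      exact haiff.2.2 ⟨T, fun t ht => ⟨hTE ht, hc t ht⟩, hTR⟩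
    obtain ⟨t0, ht0T, ht0S⟩ := hTS
    have ht0A' := hsub ⟨hTE ht0T, ht0S⟩
    refine ⟨T ∩ (SF.restrict (SF.plus (E \ S)) (SF.UPscc S E)).A, ?_,
      T, a, hTR, haA', hTplus, ⟨t0, ht0T, ht0A'⟩, rfl⟩
    rintro y ⟨hyT, hyA'⟩
    exact ⟨hTE hyT, ((SF.mem_restrictA_iff S E y).mp hyA').2.1⟩

/-- Backward direction, part 1: no attack stays inside `E`. -/
lemma backward_no_conflict {SF : SETAF α} {E : Set α} (hE : E ⊆ SF.A)
    (hloc : ∀ S ∈ SF.SCCs,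
      E ∩ S ∈ (SF.restrict (SF.plus (E \ S)) (SF.UPscc S E)).stb) :
    ∀ n : ℕ, ∀ T h, (T, h) ∈ SF.R → SF.rk h ≤ n → ¬ (T ∪ {h} ⊆ E) := by
  intro n
  induction n using Nat.strong_induction_on with
  | _ n IH =>
  intro T h hR hrk hsubE
  set S := SF.scc h with hSdef
  have hhA := SF.head_mem _ hR
  have hloc' := hloc S ⟨h, hhA, hSdef⟩
  have hEsub : E ∩ S ⊆ (SF.restrict (SF.plus (E \ S)) (SF.UPscc S E)).A := hloc'.1.1
  have hTE : T ⊆ E := fun t ht => hsubE (Or.inl ht)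
  have hhE : h ∈ E := hsubE (Or.inr rfl)
  have hhA' := hEsub ⟨hhE, SF.mem_scc_self h⟩
  have hhnat : ¬ SF.attacksArg (E \ S) h := ((SF.mem_restrictA_iff S E h).mp hhA').2.2
  have hTplus : T ∩ SF.plus (E \ S) = ∅ := by
    ext t
    simp only [Set.mem_inter_iff, Set.mem_empty_iff_false, iff_false, not_and]
    rintro htT ⟨T', hT'sub, hT'R⟩
    by_cases htS : t ∈ S
    · exact ((SF.mem_restrictA_iff S E t).mp (hEsub ⟨hTE htT, htS⟩)).2.2
        ⟨T', hT'sub, hT'R⟩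
    · have htprec : SF.prec t h :=
        ⟨SF.influences_of_edge hR htT, fun hinf =>
          htS ⟨hinf, SF.influences_of_edge hR htT⟩⟩
      have hlt : SF.rk t < SF.rk h := rk_lt (hE (hTE htT)) htprec
      refine IH (SF.rk t) (lt_of_lt_of_le hlt hrk) T' t hT'R le_rfl ?_
      rintro y (hy | hy)
      · exact (hT'sub hy).1
      · exact hy ▸ hTE htT
  have hTS : ∃ t ∈ T, t ∈ S := by
    by_contra hc; push_neg at hc
    exact hhnat ⟨T, fun t ht => ⟨hTE ht, hc t ht⟩, hR⟩
  obtain ⟨t0, ht0T, ht0S⟩ := hTS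
  have ht0A' := hEsub ⟨hTE ht0T, ht0S⟩
  have hrA' : (T ∩ (SF.restrict (SF.plus (E \ S)) (SF.UPscc S E)).A, h) ∈
      (SF.restrict (SF.plus (E \ S)) (SF.UPscc S E)).R :=
    ⟨T, h, hR, hhA', hTplus, ⟨t0, ht0T, ht0A'⟩, rfl⟩
  refine hloc'.1.2 _ hrA' ?_
  rintro y (⟨hyT, hyA'⟩ | hy)
  · exact ⟨hTE hyT, ((SF.mem_restrictA_iff S E y).mp hyA').2.1⟩
  · exact hy ▸ ⟨hhE, SF.mem_scc_self h⟩

/-- Backward direction, part 2: every argument outside `E` is attacked. -/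
lemma backward_attacks {SF : SETAF α} {E : Set α} (hE : E ⊆ SF.A)
    (hloc : ∀ S ∈ SF.SCCs,
      E ∩ S ∈ (SF.restrict (SF.plus (E \ S)) (SF.UPscc S E)).stb) :
    ∀ n : ℕ, ∀ a, a ∈ SF.A → a ∉ E → SF.rk a ≤ n → SF.attacksArg E a := by
  intro n
  induction n using Nat.strong_induction_on with
  | _ n IH =>
  intro a haA haE hrk
  set S := SF.scc a with hSdef
  by_cases hna : SF.attacksArg (E \ S) a
  · obtain ⟨T, hTsub, hTR⟩ := hna
    exact ⟨T, fun t ht => (hTsub ht).1, hTR⟩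
  · have haA' : a ∈ (SF.restrict (SF.plus (E \ S)) (SF.UPscc S E)).A :=
      (SF.mem_restrictA_iff S E a).mpr ⟨haA, SF.mem_scc_self a, hna⟩
    have hloc' := hloc S ⟨a, haA, hSdef⟩
    obtain ⟨T0, hT0sub, hT0R⟩ := hloc'.2 a ⟨haA', fun h => haE h.1⟩
    obtain ⟨T, h, hR, hhA', hTplus, hne, heq⟩ := hT0R
    injection heq with hT0eq hha
    subst hha
    subst hT0eq
    have hTE : T ⊆ E := by
      intro t htT
      by_cases htS : t ∈ S
      · have htA' : t ∈ (SF.restrict (SF.plus (E \ S)) (SF.UPscc S E)).A :=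
          (SF.mem_restrictA_iff S E t).mpr
            ⟨SF.tail_subset _ hR htT, htS,
             fun hc => Set.eq_empty_iff_forall_notMem.mp hTplus t ⟨htT, hc⟩⟩
        exact (hT0sub ⟨htT, htA'⟩).1
      · by_contra htE
        have htprec : SF.prec t a :=
          ⟨SF.influences_of_edge hR htT, fun hinf =>
            htS ⟨hinf, SF.influences_of_edge hR htT⟩⟩
        have hlt : SF.rk t < SF.rk a := rk_lt (SF.tail_subset _ hR htT) htprec
        obtain ⟨T', hT'E, hT'R⟩ :=
          IH (SF.rk t) (lt_of_lt_of_le hlt hrk) t (SF.tail_subset _ hR htT) htE le_rfl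
        by_cases hT'S : ∃ s ∈ T', s ∈ S
        · obtain ⟨s, hsT', hsS⟩ := hT'S
          exact htS (SF.mem_scc_capture hsS (SF.influences_of_edge hT'R hsT')
            (SF.influences_of_edge hR htT) (SF.mem_scc_self a))
        · push_neg at hT'S
          exact Set.eq_empty_iff_forall_notMem.mp hTplus t
            ⟨htT, T', fun s hs => ⟨hT'E hs, hT'S s hs⟩, hT'R⟩
    exact ⟨T, hTE, hR⟩

end SETAF

/-- Proposition 2: `E` is stable in `SF` iff for every SCC `S`, `E ∩ S` is stable
    in the restriction `SF↓_{UP_SF(S,E)}^{(E∖S)⁺}`. -/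
theorem stmt13 {α : Type*} (SF : SETAF α) (E : Set α) (hE : E ⊆ SF.A) :
    E ∈ SF.stb ↔
      ∀ S ∈ SF.SCCs,
        E ∩ S ∈ (SF.restrict (SF.plus (E \ S)) (SF.UPscc S E)).stb := by
  constructor
  · intro hstb S hS
    obtain ⟨x, hxA, rfl⟩ := hS
    exact SETAF.forward_scc hE hstb x
  · intro hloc
    refine ⟨⟨hE, ?_⟩, ?_⟩
    · intro r hr hsub
      exact SETAF.backward_no_conflict hE hloc (SF.rk r.2) r.1 r.2 hr le_rfl hsub
    · intro a ha
      exact SETAF.backward_attacks hE hloc (SF.rk a) a ha.1 ha.2 le_rfl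
end

section
/- Let SF = (A,R) be a SETAF, let E ∈ adm(SF), and let a be an argument that is acceptable w.r.t. E in SF (i.e., defended by E), lying in the SCC S ∈ SCCs(SF). Then a ∈ U_SF(S,E), the argument a is acceptable w.r.t. (E ∩ S) in SF↓_{UP_SF(S,E)}^{(E∖S)⁺_R} considering M_SF(S,E), and (E ∩ S) is conflict-free in SF↓_{UP_SF(S,E)}^{(E∖S)⁺_R}. -/
namespace SETAF

variable {α : Type*}

/-- No member of a conflict-free admissible-style set is attacked by a subset of it. -/
lemma not_selfattack {SF : SETAF α} {E : Set α} (hcf : E ∈ SF.cf) {x : α}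
    (hx : x ∈ E) (hatt : SF.attacksArg E x) : False := by
  obtain ⟨X, hXE, hXx⟩ := hatt
  exact hcf.2 (X, x) hXx (Set.union_subset hXE (by simpa using hx))

lemma not_plus_of_mem {SF : SETAF α} {E S : Set α} (hcf : E ∈ SF.cf) {x : α}
    (hx : x ∈ E) (hatt : x ∈ SF.plus (E \ S)) : False := by
  obtain ⟨X, hXE, hXx⟩ := hatt
  exact not_selfattack hcf hx ⟨X, hXE.trans Set.diff_subset, hXx⟩

/-- Key SCC lemma: if `t` attacks into `S` and is attacked by `E` but not by
    `E \ S`, then `t ∈ S`. -/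
lemma key_scc {SF : SETAF α} {E S : Set α} (hS : S ∈ SF.SCCs)
    {T : Set α} {h : α} (hTh : (T, h) ∈ SF.R) (hhS : h ∈ S)
    {t : α} (ht : t ∈ T) (htD : t ∉ SF.plus (E \ S))
    {X : Set α} (hXE : X ⊆ E) (hXt : (X, t) ∈ SF.R) : t ∈ S := by
  obtain ⟨b, _, rfl⟩ := hS
  -- find an element of X inside the SCC
  obtain ⟨x, hxX, hxS⟩ : ∃ x ∈ X, x ∈ SF.scc b := by
    by_contra hcon
    push_neg at hcon
    exact htD ⟨X, fun y hy => ⟨hXE hy, hcon y hy⟩, hXt⟩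
  have e1 : SF.primalEdge x t := ⟨X, hXt, hxX⟩
  have e2 : SF.primalEdge t h := ⟨T, hTh, ht⟩
  exact ⟨(hxS.1.trans (Relation.ReflTransGen.single e1)),
    (Relation.ReflTransGen.single e2).trans hhS.2⟩

/-- membership in the restricted argument set. -/
lemma mem_C {SF : SETAF α} {E S : Set α} {x : α}
    (hxA : x ∈ SF.A) (hxS : x ∈ S) (hxD : x ∉ SF.plus (E \ S)) :
    x ∈ (SF.A ∩ SF.UPscc S E) \ (SF.plus (E \ S)) := by
  refine ⟨⟨hxA, ?_⟩, hxD⟩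
  have hxDscc : x ∉ SF.Dscc S E := fun hd => hxD hd.2
  by_cases hp : x ∈ SF.Pscc S E
  · exact Or.inr hp
  · exact Or.inl ⟨hxS, fun hc => hc.elim hxDscc hp⟩

end SETAF

/-- Lemma 4: if `E` is admissible and `a` (in SCC `S`) is defended by `E`, then
    `a ∈ U_SF(S,E)`, `a` is acceptable w.r.t. `E ∩ S` in the restriction
    considering `M_SF(S,E)`, and `E ∩ S` is conflict-free in the restriction. -/
theorem stmt16 {α : Type*} (SF : SETAF α) (E : Set α) (hE : E ∈ SF.adm)
    (a : α) (ha : SF.defends E a)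
    (S : Set α) (hS : S ∈ SF.SCCs) (haS : a ∈ S) :
    a ∈ SF.Uscc S E ∧
    (SF.restrict (SF.plus (E \ S)) (SF.UPscc S E)).acceptableM
      (SF.Mscc S E) (E ∩ S) a ∧
    E ∩ S ∈ (SF.restrict (SF.plus (E \ S)) (SF.UPscc S E)).cf := by
  obtain ⟨hEcf, hEdef⟩ := hE
  set D' := SF.plus (E \ S) with hD'
  set C := (SF.A ∩ SF.UPscc S E) \ D' with hC
  -- Part 1: a ∈ Uscc S E
  have hU : a ∈ SF.Uscc S E := by
    refine ⟨haS, ?_⟩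
    rintro (⟨-, X, hXE, hXa⟩ | ⟨⟨-, T, hTsub, hTa⟩, -⟩)
    · have := ha X (hXE.trans (fun y hy => hEcf.1 hy.1)) ⟨X, le_refl X, hXa⟩
      obtain ⟨x, hxX, hatt⟩ := this
      exact (SETAF.not_selfattack hEcf (hXE hxX).1 hatt).elim
    · obtain ⟨t, htT, hatt⟩ := ha T (hTsub.trans Set.diff_subset) ⟨T, le_refl T, hTa⟩
      exact ((hTsub htT).2 (Or.inr hatt)).elim
  refine ⟨hU, ?_, ?_⟩
  -- Part 2: acceptability in the restriction
  · rintro T' hT'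
    obtain ⟨T, h, hR, hh, hTD, hne, heq⟩ := hT'
    have hT'eq : T' = T ∩ C := congrArg Prod.fst heq
    have hhead : a = h := congrArg Prod.snd heq
    subst hhead
    obtain ⟨t, htT, X, hXE, hXt⟩ := ha T (SF.tail_subset _ hR) ⟨T, le_refl T, hR⟩
    have htD : t ∉ D' := fun hd => Set.eq_empty_iff_forall_notMem.mp hTD t ⟨htT, hd⟩
    have htS : t ∈ S := SETAF.key_scc hS hR haS htT htD hXE hXt
    have htC : t ∈ C := SETAF.mem_C (SF.head_mem _ hXt) htS htD
    have hXD : X ∩ D' = ∅ := by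
      ext x; simp only [Set.mem_inter_iff, Set.mem_empty_iff_false, iff_false, not_and]
      exact fun hx hd => (SETAF.not_plus_of_mem hEcf (hXE hx) hd).elim
    have hXCsub : X ∩ C ⊆ E ∩ S := by
      rintro x ⟨hxX, hxC⟩
      refine ⟨hXE hxX, ?_⟩
      rcases hxC.1.2 with h1 | h1
      · exact h1.1
      · exact h1.1.1
    have hXCne : (X ∩ C).Nonempty := by
      obtain ⟨x, hxX, hxS⟩ : ∃ x ∈ X, x ∈ S := by
        by_contra hcon
        push_neg at hcon
        exact htD ⟨X, fun y hy => ⟨hXE hy, hcon y hy⟩, hXt⟩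
      have hxD : x ∉ D' := fun hd => SETAF.not_plus_of_mem hEcf (hXE hxX) hd
      exact ⟨x, hxX, SETAF.mem_C (hEcf.1 (hXE hxX)) hxS hxD⟩
    refine ⟨X ∩ C, t, ⟨X, t, hXt, htC, hXD, hXCne, rfl⟩, ?_, hXCsub, ?_⟩
    · rintro ⟨-, hM⟩
      exact hM X hXt Set.inter_subset_left (fun y hy => hXE hy.1)
    · rw [hT'eq]; exact ⟨htT, htC⟩
  -- Part 3: conflict-freeness of E ∩ S in the restriction
  · constructor
    · rintro x ⟨hxE, hxS⟩
      exact SETAF.mem_C (hEcf.1 hxE) hxS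
        (fun hd => SETAF.not_plus_of_mem hEcf hxE hd)
    · rintro r ⟨X, h, hR, hh, hXD, hne, rfl⟩ hsub
      have hhES : h ∈ E ∩ S := hsub (Set.mem_union_right _ rfl)
      obtain ⟨x, hxX, Y, hYE, hYx⟩ :=
        hEdef h hhES.1 X (SF.tail_subset _ hR) ⟨X, le_refl X, hR⟩
      have hxD : x ∉ SF.plus (E \ S) :=
        fun hd => Set.eq_empty_iff_forall_notMem.mp hXD x ⟨hxX, hd⟩
      have hxS : x ∈ S := SETAF.key_scc hS hR hhES.2 hxX hxD hYE hYx
      have hxC : x ∈ C := SETAF.mem_C (SF.tail_subset _ hR hxX) hxS hxD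
      have hxE : x ∈ E := (hsub (Set.mem_union_left _ ⟨hxX, hxC⟩)).1
      exact SETAF.not_selfattack hEcf hxE ⟨Y, hYE, hYx⟩
end

section
/- Let SF = (A,R) be a SETAF and let E ⊆ A be such that for every S ∈ SCCs(SF), (E ∩ S) ∈ adm(SF↓_{UP_SF(S,E)}^{(E∖S)⁺_R}, U_SF(S,E), M_SF(S,E)). Let S' ∈ SCCs(SF) and let a ∈ U_SF(S',E) be acceptable w.r.t. (E ∩ S') in SF↓_{UP_SF(S',E)}^{(E∖S')⁺_R} considering M_SF(S',E). Then a is acceptable w.r.t. E in SF (i.e., E defends a in SF). -/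
/-- Lemma 5: local acceptability implies global acceptability. -/
theorem stmt17 {α : Type*} (SF : SETAF α) (E : Set α) (hE : E ⊆ SF.A)
    (h : ∀ S ∈ SF.SCCs,
      E ∩ S ∈ (SF.restrict (SF.plus (E \ S)) (SF.UPscc S E)).admCM
        (SF.Uscc S E) (SF.Mscc S E))
    (S' : Set α) (hS' : S' ∈ SF.SCCs)
    (a : α) (ha : a ∈ SF.Uscc S' E)
    (hacc : (SF.restrict (SF.plus (E \ S')) (SF.UPscc S' E)).acceptableM
      (SF.Mscc S' E) (E ∩ S') a) :
    SF.defends E a := by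
  classical
  have hS'A : S' ⊆ SF.A := by
    obtain ⟨a0, ha0, rfl⟩ := hS'
    rintro b ⟨_, hba⟩
    rcases hba.cases_head with rfl | ⟨c, ⟨T, hTR, hbT⟩, _⟩
    · exact ha0
    · exact SF.tail_subset _ hTR hbT
  obtain ⟨haS, hnd⟩ := ha
  intro B _hB hBa
  obtain ⟨T, hTB, hTR⟩ := hBa
  by_contra hcon
  have hnoE : ∀ t ∈ T, ¬ SF.attacksArg E t := fun t ht h' => hcon ⟨t, hTB ht, h'⟩
  have hmono : ∀ (X Y : Set α) (t : α), X ⊆ Y → SF.attacksArg X t → SF.attacksArg Y t := by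
    rintro X Y t hXY ⟨T0, hT0, hR0⟩
    exact ⟨T0, hT0.trans hXY, hR0⟩
  have hnoES' : ∀ t ∈ T, ¬ SF.attacksArg (E \ S') t := fun t ht h' =>
    hnoE t ht (hmono _ _ _ Set.diff_subset h')
  have hTD : T ∩ SF.plus (E \ S') = ∅ := by
    ext t
    simp only [Set.mem_inter_iff, Set.mem_empty_iff_false, iff_false, not_and]
    exact fun ht h' => hnoES' t ht h'
  by_cases hTS : (T ∩ S').Nonempty
  · -- the attack intersects S' : use local acceptability
    obtain ⟨t0, ht0T, ht0S⟩ := hTS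
    have ht0D : t0 ∉ SF.Dscc S' E := fun hD => hnoES' t0 ht0T hD.2
    have ht0UP : t0 ∈ SF.UPscc S' E := by
      by_cases hP : t0 ∈ SF.Pscc S' E
      · exact Or.inr hP
      · exact Or.inl ⟨ht0S, fun hDP => hDP.elim ht0D hP⟩
    have ht0A' : t0 ∈ (SF.A ∩ SF.UPscc S' E) \ SF.plus (E \ S') :=
      ⟨⟨SF.tail_subset _ hTR ht0T, ht0UP⟩, fun h' => hnoES' t0 ht0T h'⟩
    have haD : a ∉ SF.plus (E \ S') := fun h' =>
      hnd (Or.inl ⟨haS, h'⟩)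
    have haA' : a ∈ (SF.A ∩ SF.UPscc S' E) \ SF.plus (E \ S') := by
      refine ⟨⟨hS'A haS, Or.inl ⟨haS, hnd⟩⟩, haD⟩
    have hRestr : (T ∩ ((SF.A ∩ SF.UPscc S' E) \ SF.plus (E \ S')), a)
        ∈ (SF.restrict (SF.plus (E \ S')) (SF.UPscc S' E)).R :=
      ⟨T, a, hTR, haA', hTD, ⟨t0, ht0T, ht0A'⟩, rfl⟩
    obtain ⟨X, t, hXR, hXM, hXE, htTA'⟩ := hacc _ hRestr
    have hex : ∃ T', (T', t) ∈ SF.R ∧ X ⊆ T' ∧ T' \ X ⊆ E := by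
      by_contra hno
      push_neg at hno
      exact hXM ⟨hXR, fun T' h1 h2 => hno T' h1 h2⟩
    obtain ⟨T', hT'R, hXT', hT'E⟩ := hex
    have hT'subE : T' ⊆ E := fun x hx => by
      by_cases hxX : x ∈ X
      · exact (hXE hxX).1
      · exact hT'E ⟨hx, hxX⟩
    exact hnoE t htTA'.1 ⟨T', hT'subE, hT'R⟩
  · -- the attack comes entirely from outside S' : contradicts a ∈ Uscc
    have hTsub : T ⊆ SF.A \ (S' ∪ SF.plus E) := by
      intro t ht
      refine ⟨SF.tail_subset _ hTR ht, ?_⟩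
      rintro (hS | hP)
      · exact hTS ⟨t, ht, hS⟩
      · exact hnoE t ht hP
    have hatt : SF.attacksArg (SF.A \ (S' ∪ SF.plus E)) a := ⟨T, hTsub, hTR⟩
    by_cases hD : a ∈ SF.Dscc S' E
    · exact hnd (Or.inl hD)
    · exact hnd (Or.inr ⟨⟨haS, hatt⟩, hD⟩)
end

section
/- Let SF = (A,R) be a SETAF, let E ∈ adm(SF), and let S ∈ SCCs(SF). Let E' ⊆ A be a set of arguments such that (E ∩ S) ⊆ E' ⊆ U_SF(S,E) and E' ∈ adm(SF↓_{UP_SF(S,E)}^{(E∖S)⁺_R}, U_SF(S,E), M_SF(S,E)). Then E ∪ E' ∈ adm(SF). -/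
/-- Lemma 6: extending an admissible set `E` by a locally admissible set `E'`
    of an SCC `S` yields an admissible set `E ∪ E'` of `SF`. -/
theorem stmt19 {α : Type*} (SF : SETAF α) (E : Set α) (hE : E ∈ SF.adm)
    (S : Set α) (hS : S ∈ SF.SCCs)
    (E' : Set α) (hE' : E' ⊆ SF.A)
    (h1 : E ∩ S ⊆ E') (h2 : E' ⊆ SF.Uscc S E)
    (h3 : E' ∈ (SF.restrict (SF.plus (E \ S)) (SF.UPscc S E)).admCM
      (SF.Uscc S E) (SF.Mscc S E)) :
    E ∪ E' ∈ SF.adm := by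
  classical
  obtain ⟨⟨hEA, hEcf⟩, hEdef⟩ := hE
  obtain ⟨hE'C, ⟨hE'subA', hE'cf⟩, hE'acc⟩ := h3
  have hUPsubS : SF.UPscc S E ⊆ S := by
    rintro a (ha | ha)
    · exact ha.1
    · exact ha.1.1
  have hU_nD : ∀ a ∈ SF.Uscc S E, ¬ SF.attacksArg (E \ S) a := by
    intro a ha hatt
    exact ha.2 (Or.inl ⟨ha.1, hatt⟩)
  have hU_nP : ∀ a ∈ SF.Uscc S E, ¬ SF.attacksArg (SF.A \ (S ∪ SF.plus E)) a := by
    intro a ha hatt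
    exact ha.2 (Or.inr ⟨⟨ha.1, hatt⟩, fun hD => ha.2 (Or.inl hD)⟩)
  have hEnoself : ∀ x ∈ E, ¬ SF.attacksArg E x := by
    rintro x hx ⟨T, hTE, hTR⟩
    refine hEcf (T, x) hTR ?_
    rintro y (hy | rfl)
    · exact hTE hy
    · exact hx
  have hDsubPlus : SF.plus (E \ S) ⊆ SF.plus E := by
    rintro a ⟨T, hT, hR⟩
    exact ⟨T, fun t ht => (hT ht).1, hR⟩
  have hE_nD : ∀ x ∈ E, x ∉ SF.plus (E \ S) := by
    intro x hx hxD
    exact hEnoself x hx (hDsubPlus hxD)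
  have hE'_nD : ∀ x ∈ E', x ∉ SF.plus (E \ S) := fun x hx hxD => hU_nD x (h2 hx) hxD
  have hE'A' : ∀ x ∈ E', x ∈ (SF.A ∩ SF.UPscc S E) \ SF.plus (E \ S) :=
    fun x hx => ⟨⟨hE' hx, Or.inl (h2 hx)⟩, hE'_nD x hx⟩
  have hES_E' : ∀ x, x ∈ E → x ∈ S → x ∈ E' := fun x hx hs => h1 ⟨hx, hs⟩
  have mkR' : ∀ T h, (T, h) ∈ SF.R → h ∈ E' → (∀ t ∈ T, t ∉ SF.plus (E \ S)) →
      (T ∩ ((SF.A ∩ SF.UPscc S E) \ SF.plus (E \ S))).Nonempty →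
      (T ∩ ((SF.A ∩ SF.UPscc S E) \ SF.plus (E \ S)), h)
        ∈ (SF.restrict (SF.plus (E \ S)) (SF.UPscc S E)).R := by
    intro T h hR hh hTD hne
    exact ⟨T, h, hR, hE'A' h hh,
      Set.eq_empty_iff_forall_notMem.mpr (fun t ht => hTD t ht.1 ht.2), hne, rfl⟩
  have factA : ∀ x ∈ E ∪ E', ¬ SF.attacksArg E x := by
    rintro x hx ⟨T, hTE, hTR⟩
    rcases hx with hx | hx
    · exact hEnoself x hx ⟨T, hTE, hTR⟩
    · have hxU := h2 hx
      have hTnS : ∃ t ∈ T, t ∈ S := by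
        by_contra hcon
        push_neg at hcon
        exact hU_nD x hxU ⟨T, fun t ht => ⟨hTE ht, hcon t ht⟩, hTR⟩
      obtain ⟨t, htT, htS⟩ := hTnS
      have htE' : t ∈ E' := hES_E' t (hTE htT) htS
      have hr := mkR' T x hTR hx (fun u hu => hE_nD u (hTE hu))
        ⟨t, htT, hE'A' t htE'⟩
      refine hE'cf _ hr ?_
      rintro y (hy | rfl)
      · exact hES_E' y (hTE hy.1) (hUPsubS hy.2.1.2)
      · exact hx
  refine ⟨⟨Set.union_subset hEA hE', ?_⟩, ?_⟩
  · -- conflict-freeness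
    rintro ⟨T, h⟩ hTR hsub
    have hT : T ⊆ E ∪ E' := fun t ht => hsub (Or.inl ht)
    have hh : h ∈ E ∪ E' := hsub (Or.inr rfl)
    rcases hh with hh | hh
    · obtain ⟨y, hyT, hyatt⟩ := hEdef h hh T (SF.tail_subset _ hTR)
        ⟨T, Set.Subset.refl T, hTR⟩
      exact factA y (hT hyT) hyatt
    · have hhU := h2 hh
      have hex : ∃ t ∈ T, t ∈ S ∪ SF.plus E := by
        by_contra hcon
        push_neg at hcon
        exact hU_nP h hhU ⟨T, fun t ht => ⟨SF.tail_subset _ hTR ht, hcon t ht⟩, hTR⟩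
      obtain ⟨t, htT, hts⟩ := hex
      have htS : t ∈ S := by
        rcases hts with h' | h'
        · exact h'
        · exact absurd h' (factA t (hT htT))
      have htE' : t ∈ E' := by
        rcases hT htT with h' | h'
        · exact hES_E' t h' htS
        · exact h'
      have hTD : ∀ u ∈ T, u ∉ SF.plus (E \ S) := by
        intro u hu
        rcases hT hu with h' | h'
        · exact hE_nD u h'
        · exact hE'_nD u h'
      have hr := mkR' T h hTR hh hTD ⟨t, htT, hE'A' t htE'⟩
      refine hE'cf _ hr ?_
      rintro y (hy | rfl)
      · rcases hT hy.1 with h' | h'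
        · exact hES_E' y h' (hUPsubS hy.2.1.2)
        · exact h'
      · exact hh
  · -- defense
    rintro a ha B hBA ⟨T, hTB, hTR⟩
    rcases ha with ha | ha
    · obtain ⟨y, hyB, X, hXE, hXR⟩ := hEdef a ha B hBA ⟨T, hTB, hTR⟩
      exact ⟨y, hyB, X, fun x hx => Or.inl (hXE hx), hXR⟩
    · by_cases hTp : ∃ t ∈ T, t ∈ SF.plus E
      · obtain ⟨t, htT, X, hXE, hXR⟩ := hTp
        exact ⟨t, hTB htT, X, fun x hx => Or.inl (hXE hx), hXR⟩
      · push_neg at hTp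
        have haU := h2 ha
        have hex : ∃ t ∈ T, t ∈ S ∪ SF.plus E := by
          by_contra hcon
          push_neg at hcon
          exact hU_nP a haU ⟨T, fun t ht => ⟨SF.tail_subset _ hTR ht, hcon t ht⟩, hTR⟩
        obtain ⟨t, htT, hts⟩ := hex
        have htS : t ∈ S := hts.resolve_right (hTp t htT)
        have hTD : ∀ u ∈ T, u ∉ SF.plus (E \ S) :=
          fun u hu hD => hTp u hu (hDsubPlus hD)
        have htUP : t ∈ SF.UPscc S E := by
          by_cases hP : t ∈ SF.Pscc S E
          · exact Or.inr hP
          · refine Or.inl ⟨htS, ?_⟩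
            rintro (hD | hPP)
            · exact hTD t htT hD.2
            · exact hP hPP
        have htA' : t ∈ (SF.A ∩ SF.UPscc S E) \ SF.plus (E \ S) :=
          ⟨⟨SF.tail_subset _ hTR htT, htUP⟩, hTD t htT⟩
        have hr := mkR' T a hTR ha hTD ⟨t, htT, htA'⟩
        obtain ⟨X, y, hXR', hXM, hXE', hyT⟩ := hE'acc a ha _ hr
        have hnm : ¬ ∀ T', (T', y) ∈ SF.R → X ⊆ T' → ¬ T' \ X ⊆ E :=
          fun hall => hXM ⟨hXR', hall⟩
        push_neg at hnm
        obtain ⟨T', hT'R, hXT', hT'E⟩ := hnm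
        refine ⟨y, hTB hyT.1, T', ?_, hT'R⟩
        intro u hu
        by_cases huX : u ∈ X
        · exact Or.inr (hXE' huX)
        · exact Or.inl (hT'E ⟨hu, huX⟩)
end
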